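/- Let g be the Lie superalgebra with even part an abelian Lie algebra h, odd part spanned by X_1, X_2, Y_1, Y_2 with relations [h,X_i] = α(h)X_i, [h,Y_i] = −α(h)Y_i, [Y_i,Y_j] = [X_i,X_j] = 0, [X_i,Y_j] = δ_{ij}H, where H ∈ h, α ∈ h* nonzero, α(H) = 0. Then the supercharacter of every finite-dimensional irreducible g-module with highest weight λ is e^λ if λ(H) = 0 and e^λ(1 − e^{−α})² if λ(H) ≠ 0; in the latter case the module is four-dimensional. -/

import Mathlib

open scoped Classical

namespace Stmt16

open Module

variable {hL : Type*} [AddCommGroup hL] [Module ℂ hL]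
variable {V : Type*} [AddCommGroup V] [Module ℂ V]

/-- the weight space `V_μ = {u : ρ(h)u = μ(h)u for all h}`. -/
noncomputable def wt (ρ : hL →ₗ[ℂ] Module.End ℂ V) (μ : hL →ₗ[ℂ] ℂ) : Submodule ℂ V :=
  ⨅ h : hL, LinearMap.ker (ρ h - μ h • (LinearMap.id : Module.End ℂ V))

/-- the even part of `V` with respect to the grading involution `gr`. -/
noncomputable def evenPart (gr : Module.End ℂ V) : Submodule ℂ V :=
  LinearMap.ker (gr - LinearMap.id)

/-- the odd part of `V` with respect to the grading involution `gr`. -/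
noncomputable def oddPart (gr : Module.End ℂ V) : Submodule ℂ V :=
  LinearMap.ker (gr + LinearMap.id)

/-- the coefficient `sdim V_μ` of the supercharacter at `e^μ`. -/
noncomputable def sdimWt (gr : Module.End ℂ V) (ρ : hL →ₗ[ℂ] Module.End ℂ V)
    (μ : hL →ₗ[ℂ] ℂ) : ℤ :=
  (finrank ℂ (wt ρ μ ⊓ evenPart gr : Submodule ℂ V) : ℤ) -
    (finrank ℂ (wt ρ μ ⊓ oddPart gr : Submodule ℂ V) : ℤ)


lemma mem_wt {ρ : hL →ₗ[ℂ] Module.End ℂ V} {μ : hL →ₗ[ℂ] ℂ} {u : V} :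
    u ∈ wt ρ μ ↔ ∀ h, ρ h u = μ h • u := by
  simp [wt, Submodule.mem_iInf, LinearMap.mem_ker, sub_eq_zero]

lemma mem_even {gr : Module.End ℂ V} {u : V} : u ∈ evenPart gr ↔ gr u = u := by
  simp [evenPart, LinearMap.mem_ker, sub_eq_zero]

lemma mem_odd {gr : Module.End ℂ V} {u : V} : u ∈ oddPart gr ↔ gr u = -u := by
  simp [oddPart, LinearMap.mem_ker, add_eq_zero_iff_eq_neg]

lemma eig_quad (T : Module.End ℂ V) (c1 c2 : ℂ) (u : V) (c : ℂ) (hu : T u = c • u) :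
    ((T - c1 • 1) * (T - c2 • 1)) u = ((c - c1) * (c - c2)) • u := by
  have e1 : (T - c2 • (1 : Module.End ℂ V)) u = (c - c2) • u := by
    simp [LinearMap.sub_apply, hu, sub_smul]
  rw [Module.End.mul_apply, e1]
  simp [LinearMap.sub_apply, map_smul, hu, sub_smul, smul_smul]
  module

lemma sep3' (T : Module.End ℂ V) (u₀ u₁ u₂ : V) (c₀ c₁ c₂ : ℂ)
    (h₀ : T u₀ = c₀ • u₀) (h₁ : T u₁ = c₁ • u₁) (h₂ : T u₂ = c₂ • u₂)
    (hsum : u₀ + u₁ + u₂ = 0) (h01 : c₀ ≠ c₁) (h02 : c₀ ≠ c₂) : u₀ = 0 := by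
  set P : Module.End ℂ V := (T - c₁ • 1) * (T - c₂ • 1) with hP
  have key : ∀ (u : V) (c : ℂ), T u = c • u → P u = ((c - c₁) * (c - c₂)) • u := by
    intro u c hu
    have e1 : (T - c₂ • (1 : Module.End ℂ V)) u = (c - c₂) • u := by
      simp [LinearMap.sub_apply, hu, sub_smul]
    have : P u = (T - c₁ • (1 : Module.End ℂ V)) ((c - c₂) • u) := by
      rw [hP, Module.End.mul_apply, e1]
    rw [this]
    simp [LinearMap.sub_apply, map_smul, hu, sub_smul, smul_smul]
    module
  have e0 : P u₀ + P u₁ + P u₂ = 0 := by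
    rw [← map_add, ← map_add, hsum, map_zero]
  rw [key u₀ c₀ h₀, key u₁ c₁ h₁, key u₂ c₂ h₂] at e0
  simp [sub_self] at e0
  rcases e0 with e0 | e0
  · rcases e0 with e0 | e0
    · exact absurd (sub_eq_zero.mp e0) h01
    · exact absurd (sub_eq_zero.mp e0) h02
  · exact e0

lemma sep3 (T : Module.End ℂ V) (u₀ u₁ u₂ : V) (c₀ c₁ c₂ : ℂ)
    (h₀ : T u₀ = c₀ • u₀) (h₁ : T u₁ = c₁ • u₁) (h₂ : T u₂ = c₂ • u₂)
    (hsum : u₀ + u₁ + u₂ = 0) (h01 : c₀ ≠ c₁) (h02 : c₀ ≠ c₂) (h12 : c₁ ≠ c₂) :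
    u₀ = 0 ∧ u₁ = 0 ∧ u₂ = 0 :=
  ⟨sep3' T u₀ u₁ u₂ c₀ c₁ c₂ h₀ h₁ h₂ hsum h01 h02,
    sep3' T u₁ u₀ u₂ c₁ c₀ c₂ h₁ h₀ h₂ (by rw [← hsum]; abel) h01.symm h12,
    sep3' T u₂ u₀ u₁ c₂ c₀ c₁ h₂ h₀ h₁ (by rw [← hsum]; abel) h02.symm h12.symm⟩

/-- let `g` be the solvable Lie superalgebra with abelian even part `h`,
odd part spanned by `X₁, X₂, Y₁, Y₂`, relations `[h,Xᵢ] = α(h)Xᵢ`, `[h,Yᵢ] = −α(h)Yᵢ`,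
`[Yᵢ,Yⱼ] = [Xᵢ,Xⱼ] = 0`, `[Xᵢ,Yⱼ] = δᵢⱼH`, where `α ≠ 0` and `α(H) = 0`.  The
supercharacter of every finite-dimensional (graded-)irreducible `g`-module with
highest weight `λ` (an even vector `v ≠ 0` with `X₁v = X₂v = 0`, `hv = λ(h)v`) is
`e^λ` if `λ(H) = 0` and `e^λ(1 − e^{−α})² = e^λ − 2e^{λ−α} + e^{λ−2α}` if `λ(H) ≠ 0`;
in the latter case the module is four-dimensional. -/
theorem statement16 [FiniteDimensional ℂ V]
    (α : hL →ₗ[ℂ] ℂ) (hα : α ≠ 0) (H : hL) (hαH : α H = 0)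
    (gr : Module.End ℂ V) (hgr : gr * gr = 1)
    (ρ : hL →ₗ[ℂ] Module.End ℂ V) (Xop Yop : Fin 2 → Module.End ℂ V)
    -- h acts as an abelian Lie algebra of even operators
    (hcomm : ∀ h₁ h₂ : hL, ρ h₁ * ρ h₂ = ρ h₂ * ρ h₁)
    (hρeven : ∀ h : hL, ρ h * gr = gr * ρ h)
    -- the Xᵢ, Yᵢ are odd
    (hXodd : ∀ i, Xop i * gr = -(gr * Xop i)) (hYodd : ∀ i, Yop i * gr = -(gr * Yop i))
    -- the bracket relations
    (hHX : ∀ (h : hL) (i), ρ h * Xop i - Xop i * ρ h = α h • Xop i)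
    (hHY : ∀ (h : hL) (i), ρ h * Yop i - Yop i * ρ h = -(α h) • Yop i)
    (hXX : ∀ i j, Xop i * Xop j + Xop j * Xop i = 0)
    (hYY : ∀ i j, Yop i * Yop j + Yop j * Yop i = 0)
    (hXY : ∀ i j, Xop i * Yop j + Yop j * Xop i = if i = j then ρ H else 0)
    -- V is an irreducible graded module
    (hirr : ∀ U : Submodule ℂ V, (∀ u ∈ U, gr u ∈ U) → (∀ h : hL, ∀ u ∈ U, ρ h u ∈ U) →
      (∀ i, ∀ u ∈ U, Xop i u ∈ U) → (∀ i, ∀ u ∈ U, Yop i u ∈ U) → U = ⊥ ∨ U = ⊤)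
    -- highest weight vector of weight λ, taken even
    (lam : hL →ₗ[ℂ] ℂ) (v : V) (hv : v ≠ 0) (hvev : gr v = v)
    (hXv : ∀ i, Xop i v = 0) (hwt : ∀ h : hL, ρ h v = lam h • v) :
    (lam H = 0 →
      ∀ μ : hL →ₗ[ℂ] ℂ, sdimWt gr ρ μ = if μ = lam then 1 else 0) ∧
    (lam H ≠ 0 →
      finrank ℂ V = 4 ∧
        ∀ μ : hL →ₗ[ℂ] ℂ, sdimWt gr ρ μ =
          if μ = lam then 1 else if μ = lam - α then -2 else
            if μ = lam - 2 • α then 1 else 0) := by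

  obtain ⟨h₀, hh₀⟩ : ∃ h, α h ≠ 0 := by
    by_contra hc; push_neg at hc
    exact hα (LinearMap.ext fun h => by simpa using hc h)
  set w1 : V := Yop 0 v with hw1d
  set w2 : V := Yop 1 v with hw2d
  set w3 : V := Yop 1 w1 with hw3d
  -- grading facts
  have hgrw1 : gr w1 = -w1 := by
    have h := LinearMap.congr_fun (hYodd 0) v
    simp only [Module.End.mul_apply, LinearMap.neg_apply, hvev] at h
    rw [← hw1d] at h
    exact neg_eq_iff_eq_neg.mp h.symm
  have hgrw2 : gr w2 = -w2 := by
    have h := LinearMap.congr_fun (hYodd 1) v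
    simp only [Module.End.mul_apply, LinearMap.neg_apply, hvev] at h
    rw [← hw2d] at h
    exact neg_eq_iff_eq_neg.mp h.symm
  have hgrw3 : gr w3 = w3 := by
    have h := LinearMap.congr_fun (hYodd 1) w1
    simp only [Module.End.mul_apply, LinearMap.neg_apply, hgrw1, map_neg] at h
    rw [← hw3d] at h
    -- h : -w3 = -(gr w3)
    have := neg_injective h
    exact this.symm
  -- rho eigen facts
  have hrw1 : ∀ h : hL, ρ h w1 = (lam h - α h) • w1 := by
    intro h
    have e := LinearMap.congr_fun (hHY h 0) v
    simp only [LinearMap.sub_apply, Module.End.mul_apply, LinearMap.smul_apply,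
      LinearMap.neg_apply, hwt, map_smul, neg_smul] at e
    rw [← hw1d] at e
    rw [sub_eq_iff_eq_add] at e
    rw [e, sub_smul]; abel
  have hrw2 : ∀ h : hL, ρ h w2 = (lam h - α h) • w2 := by
    intro h
    have e := LinearMap.congr_fun (hHY h 1) v
    simp only [LinearMap.sub_apply, Module.End.mul_apply, LinearMap.smul_apply,
      LinearMap.neg_apply, hwt, map_smul, neg_smul] at e
    rw [← hw2d] at e
    rw [sub_eq_iff_eq_add] at e
    rw [e, sub_smul]; abel
  have hrw3 : ∀ h : hL, ρ h w3 = (lam h - 2 * α h) • w3 := by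
    intro h
    have e := LinearMap.congr_fun (hHY h 1) w1
    simp only [LinearMap.sub_apply, Module.End.mul_apply, LinearMap.smul_apply,
      LinearMap.neg_apply, hrw1 h, map_smul, neg_smul] at e
    rw [← hw3d] at e
    rw [sub_eq_iff_eq_add] at e
    rw [e]; module
  -- X facts
  have hX0w1 : Xop 0 w1 = lam H • v := by
    have e := LinearMap.congr_fun (hXY 0 0) v
    simp only [eq_self_iff_true, if_true, LinearMap.add_apply, Module.End.mul_apply, hXv, map_zero,
      add_zero, hwt] at e
    rw [← hw1d] at e; exact e
  have hX1w1 : Xop 1 w1 = 0 := by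
    have e := LinearMap.congr_fun (hXY 1 0) v
    simp only [show ((1:Fin 2) = 0) = False by simp, if_false, LinearMap.add_apply,
      Module.End.mul_apply, hXv, map_zero, add_zero, LinearMap.zero_apply] at e
    rw [← hw1d] at e; exact e
  have hX0w2 : Xop 0 w2 = 0 := by
    have e := LinearMap.congr_fun (hXY 0 1) v
    simp only [show ((0:Fin 2) = 1) = False by simp, if_false, LinearMap.add_apply,
      Module.End.mul_apply, hXv, map_zero, add_zero, LinearMap.zero_apply] at e
    rw [← hw2d] at e; exact e
  have hX1w2 : Xop 1 w2 = lam H • v := by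
    have e := LinearMap.congr_fun (hXY 1 1) v
    simp only [eq_self_iff_true, if_true, LinearMap.add_apply, Module.End.mul_apply, hXv, map_zero,
      add_zero, hwt] at e
    rw [← hw2d] at e; exact e
  have hX0w3 : Xop 0 w3 = -(lam H • w2) := by
    have e := LinearMap.congr_fun (hXY 0 1) w1
    simp only [show ((0:Fin 2) = 1) = False by simp, if_false, LinearMap.add_apply,
      Module.End.mul_apply, hX0w1, map_smul, LinearMap.zero_apply] at e
    rw [← hw3d, ← hw2d] at e
    exact eq_neg_of_add_eq_zero_left e
  have hX1w3 : Xop 1 w3 = lam H • w1 := by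
    have e := LinearMap.congr_fun (hXY 1 1) w1
    simp only [eq_self_iff_true, if_true, LinearMap.add_apply, Module.End.mul_apply, hX1w1, map_zero,
      add_zero, hrw1 H, hαH, sub_zero] at e
    rw [← hw3d] at e; exact e
  -- Y facts
  have two_cancel : ∀ u : V, u + u = 0 → u = 0 := by
    intro u hu
    have : (2:ℂ) • u = 0 := by rw [two_smul]; exact hu
    simpa using (smul_eq_zero.mp this).resolve_left (by norm_num)
  have hY0w1 : Yop 0 w1 = 0 := by
    have e := LinearMap.congr_fun (hYY 0 0) v
    simp only [LinearMap.add_apply, Module.End.mul_apply, LinearMap.zero_apply] at e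
    rw [← hw1d] at e
    exact two_cancel _ e
  have hY1w2 : Yop 1 w2 = 0 := by
    have e := LinearMap.congr_fun (hYY 1 1) v
    simp only [LinearMap.add_apply, Module.End.mul_apply, LinearMap.zero_apply] at e
    rw [← hw2d] at e
    exact two_cancel _ e
  have hY0w2 : Yop 0 w2 = -w3 := by
    have e := LinearMap.congr_fun (hYY 0 1) v
    simp only [LinearMap.add_apply, Module.End.mul_apply, LinearMap.zero_apply] at e
    rw [← hw1d, ← hw2d, ← hw3d] at e
    exact eq_neg_of_add_eq_zero_left e
  have hY0w3 : Yop 0 w3 = 0 := by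
    have e := LinearMap.congr_fun (hYY 0 1) w1
    simp only [LinearMap.add_apply, Module.End.mul_apply, LinearMap.zero_apply, hY0w1,
      map_zero, add_zero] at e
    rw [← hw3d] at e; exact e
  have hY1w3 : Yop 1 w3 = 0 := by
    have e := LinearMap.congr_fun (hYY 1 1) w1
    simp only [LinearMap.add_apply, Module.End.mul_apply, LinearMap.zero_apply] at e
    rw [← hw3d] at e
    exact two_cancel _ e

  -- the span of the four vectors
  set w : Fin 4 → V := ![v, w1, w2, w3] with hwdef
  set U : Submodule ℂ V := Submodule.span ℂ (Set.range w) with hUdef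
  have hwmem : ∀ i, w i ∈ U := fun i => Submodule.subset_span ⟨i, rfl⟩
  have hw0 : w 0 = v := rfl
  have hw1 : w 1 = w1 := rfl
  have hw2 : w 2 = w2 := rfl
  have hw3 : w 3 = w3 := rfl
  have hstab : ∀ T : Module.End ℂ V, (∀ i, T (w i) ∈ U) → ∀ u ∈ U, T u ∈ U := by
    intro T hT u hu
    have : U ≤ Submodule.comap T U := by
      rw [hUdef]
      exact Submodule.span_le.mpr (by rintro x ⟨i, rfl⟩; exact hT i)
    exact this hu
  have hUtop : U = ⊤ := by
    rcases hirr U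
      (hstab gr (by
        intro i
        match i with
        | 0 => rw [hw0, hvev]; exact hwmem 0
        | 1 => rw [hw1, hgrw1]; exact Submodule.neg_mem U (hwmem 1)
        | 2 => rw [hw2, hgrw2]; exact Submodule.neg_mem U (hwmem 2)
        | 3 => rw [hw3, hgrw3]; exact hwmem 3))
      (fun h => hstab (ρ h) (by
        intro i
        match i with
        | 0 => rw [hw0, hwt]; exact Submodule.smul_mem U _ (hwmem 0)
        | 1 => rw [hw1, hrw1]; exact Submodule.smul_mem U _ (hwmem 1)
        | 2 => rw [hw2, hrw2]; exact Submodule.smul_mem U _ (hwmem 2)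
        | 3 => rw [hw3, hrw3]; exact Submodule.smul_mem U _ (hwmem 3)))
      (fun i => hstab (Xop i) (by
        intro j
        match i, j with
        | 0, 0 => rw [hw0, hXv]; exact Submodule.zero_mem U
        | 0, 1 => rw [hw1, hX0w1]; exact Submodule.smul_mem U _ (hwmem 0)
        | 0, 2 => rw [hw2, hX0w2]; exact Submodule.zero_mem U
        | 0, 3 => rw [hw3, hX0w3]; exact Submodule.neg_mem U (Submodule.smul_mem U _ (hwmem 2))
        | 1, 0 => rw [hw0, hXv]; exact Submodule.zero_mem U
        | 1, 1 => rw [hw1, hX1w1]; exact Submodule.zero_mem U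
        | 1, 2 => rw [hw2, hX1w2]; exact Submodule.smul_mem U _ (hwmem 0)
        | 1, 3 => rw [hw3, hX1w3]; exact Submodule.smul_mem U _ (hwmem 1)))
      (fun i => hstab (Yop i) (by
        intro j
        match i, j with
        | 0, 0 => rw [hw0, ← hw1d]; exact hwmem 1
        | 0, 1 => rw [hw1, hY0w1]; exact Submodule.zero_mem U
        | 0, 2 => rw [hw2, hY0w2]; exact Submodule.neg_mem U (hwmem 3)
        | 0, 3 => rw [hw3, hY0w3]; exact Submodule.zero_mem U
        | 1, 0 => rw [hw0, ← hw2d]; exact hwmem 2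
        | 1, 1 => rw [hw1, ← hw3d]; exact hwmem 3
        | 1, 2 => rw [hw2, hY1w2]; exact Submodule.zero_mem U
        | 1, 3 => rw [hw3, hY1w3]; exact Submodule.zero_mem U)) with hbot | htop
    · exact absurd (hbot ▸ hwmem 0 : v ∈ (⊥ : Submodule ℂ V)) (by simpa using hv)
    · exact htop

  have coeffs : ∀ u : V, ∃ c : Fin 4 → ℂ, u = c 0 • v + c 1 • w1 + c 2 • w2 + c 3 • w3 := by
    intro u
    have hm : u ∈ U := hUtop ▸ Submodule.mem_top
    rw [hUdef, Submodule.mem_span_range_iff_exists_fun] at hm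
    obtain ⟨c, hc⟩ := hm
    exact ⟨c, by rw [← hc, Fin.sum_univ_four]; rfl⟩
  have ne_exists : ∀ μ ν : hL →ₗ[ℂ] ℂ, μ ≠ ν → ∃ h, μ h ≠ ν h := by
    intro μ ν hne
    by_contra hc; push_neg at hc
    exact hne (LinearMap.ext hc)
  have hstab2 : ∀ (S : Submodule ℂ V) (T : Module.End ℂ V) (s : Set V),
      Submodule.span ℂ s = S → (∀ x ∈ s, T x ∈ S) → ∀ u ∈ S, T u ∈ S := by
    intro S T s hs hT u hu
    have : S ≤ Submodule.comap T S := by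
      nth_rewrite 1 [← hs]
      exact Submodule.span_le.mpr fun x hx => Submodule.mem_comap.mpr (hT x hx)
    exact this hu
  constructor
  · -- case lam H = 0
    intro hlamH μ
    set W : Fin 3 → V := ![w1, w2, w3] with hWdef
    set U' : Submodule ℂ V := Submodule.span ℂ (Set.range W) with hU'def
    have hWmem : ∀ i, W i ∈ U' := fun i => Submodule.subset_span ⟨i, rfl⟩
    have hW0 : W 0 = w1 := rfl
    have hW1 : W 1 = w2 := rfl
    have hW2 : W 2 = w3 := rfl
    have hU'bot : U' = ⊥ := by
      rcases hirr U'
        (hstab2 U' gr _ hU'def.symm (by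
          rintro x ⟨i, rfl⟩
          match i with
          | 0 => rw [hW0, hgrw1]; exact Submodule.neg_mem U' (hWmem 0)
          | 1 => rw [hW1, hgrw2]; exact Submodule.neg_mem U' (hWmem 1)
          | 2 => rw [hW2, hgrw3]; exact hWmem 2))
        (fun h => hstab2 U' (ρ h) _ hU'def.symm (by
          rintro x ⟨i, rfl⟩
          match i with
          | 0 => rw [hW0, hrw1]; exact Submodule.smul_mem U' _ (hWmem 0)
          | 1 => rw [hW1, hrw2]; exact Submodule.smul_mem U' _ (hWmem 1)
          | 2 => rw [hW2, hrw3]; exact Submodule.smul_mem U' _ (hWmem 2)))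
        (fun i => hstab2 U' (Xop i) _ hU'def.symm (by
          rintro x ⟨j, rfl⟩
          match i, j with
          | 0, 0 => rw [hW0, hX0w1, hlamH, zero_smul]; exact Submodule.zero_mem U'
          | 0, 1 => rw [hW1, hX0w2]; exact Submodule.zero_mem U'
          | 0, 2 => rw [hW2, hX0w3, hlamH, zero_smul, neg_zero]; exact Submodule.zero_mem U'
          | 1, 0 => rw [hW0, hX1w1]; exact Submodule.zero_mem U'
          | 1, 1 => rw [hW1, hX1w2, hlamH, zero_smul]; exact Submodule.zero_mem U'
          | 1, 2 => rw [hW2, hX1w3, hlamH, zero_smul]; exact Submodule.zero_mem U'))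
        (fun i => hstab2 U' (Yop i) _ hU'def.symm (by
          rintro x ⟨j, rfl⟩
          match i, j with
          | 0, 0 => rw [hW0, hY0w1]; exact Submodule.zero_mem U'
          | 0, 1 => rw [hW1, hY0w2]; exact Submodule.neg_mem U' (hWmem 2)
          | 0, 2 => rw [hW2, hY0w3]; exact Submodule.zero_mem U'
          | 1, 0 => rw [hW0, ← hw3d]; exact hWmem 2
          | 1, 1 => rw [hW1, hY1w2]; exact Submodule.zero_mem U'
          | 1, 2 => rw [hW2, hY1w3]; exact Submodule.zero_mem U')) with hb | ht
      · exact hb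
      · exfalso
        set P : Module.End ℂ V :=
          (ρ h₀ - (lam h₀ - α h₀) • 1) * (ρ h₀ - (lam h₀ - 2 * α h₀) • 1) with hPdef
        have hPU' : U' ≤ LinearMap.ker P := by
          rw [hU'def]
          apply Submodule.span_le.mpr
          rintro x ⟨i, rfl⟩
          rw [SetLike.mem_coe, LinearMap.mem_ker]
          match i with
          | 0 =>
            rw [hW0, hPdef, eig_quad (ρ h₀) _ _ w1 _ (hrw1 h₀)]
            rw [sub_self, zero_mul, zero_smul]
          | 1 =>
            rw [hW1, hPdef, eig_quad (ρ h₀) _ _ w2 _ (hrw2 h₀)]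
            rw [sub_self, zero_mul, zero_smul]
          | 2 =>
            rw [hW2, hPdef, eig_quad (ρ h₀) _ _ w3 _ (hrw3 h₀)]
            rw [sub_self, mul_zero, zero_smul]
        have hvU' : v ∈ U' := ht ▸ Submodule.mem_top
        have hPv : P v = 0 := hPU' hvU'
        rw [hPdef, eig_quad (ρ h₀) _ _ v _ (hwt h₀)] at hPv
        rcases smul_eq_zero.mp hPv with hz | hz
        · apply hh₀
          have : (lam h₀ - (lam h₀ - α h₀)) * (lam h₀ - (lam h₀ - 2 * α h₀)) = 2 * α h₀ ^ 2 := by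
            ring
          rw [this] at hz
          have := mul_eq_zero.mp hz
          rcases this with h' | h'
          · norm_num at h'
          · exact pow_eq_zero_iff (by norm_num) |>.mp h'
        · exact hv hz
    have hw1z : w1 = 0 := by
      have := hWmem 0; rw [hU'bot, Submodule.mem_bot] at this; exact this
    have hw2z : w2 = 0 := by
      have := hWmem 1; rw [hU'bot, Submodule.mem_bot] at this; exact this
    have hw3z : w3 = 0 := by
      have := hWmem 2; rw [hU'bot, Submodule.mem_bot] at this; exact this
    have V1 : ∀ u : V, ∃ c : ℂ, u = c • v := by
      intro u
      obtain ⟨c, hc⟩ := coeffs u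
      exact ⟨c 0, by rw [hc, hw1z, hw2z, hw3z]; simp⟩
    have heven : evenPart gr = ⊤ := by
      rw [eq_top_iff]
      intro u _
      obtain ⟨c, rfl⟩ := V1 u
      rw [mem_even, map_smul, hvev]
    have hoddb : oddPart gr = ⊥ := by
      rw [eq_bot_iff]
      intro u hu
      rw [mem_odd] at hu
      obtain ⟨c, rfl⟩ := V1 u
      rw [map_smul, hvev] at hu
      rw [Submodule.mem_bot]
      exact two_cancel _ (by nth_rewrite 2 [hu]; abel)
    have hrk1 : finrank ℂ V = 1 :=
      finrank_eq_one v hv (fun u => (V1 u).imp fun c h => h.symm)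
    by_cases hμ : μ = lam
    · subst hμ
      have hwtT : wt ρ μ = ⊤ := by
        rw [eq_top_iff]
        intro u _
        rw [mem_wt]
        intro h
        obtain ⟨c, rfl⟩ := V1 u
        rw [map_smul, hwt, smul_comm]
      rw [if_pos rfl]
      unfold sdimWt
      rw [hwtT, heven, hoddb, top_inf_eq, top_inf_eq, finrank_top, hrk1, finrank_bot]
      norm_num
    · have hwtB : wt ρ μ = ⊥ := by
        rw [eq_bot_iff]
        intro u hu
        obtain ⟨h1, hne⟩ := ne_exists lam μ (Ne.symm hμ)
        obtain ⟨c, rfl⟩ := V1 u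
        have e := mem_wt.mp hu h1
        rw [map_smul, hwt] at e
        have e2 : (c * lam h1 - μ h1 * c) • v = 0 := by
          rw [sub_smul, ← smul_smul, ← smul_smul, e]; abel
        rcases smul_eq_zero.mp e2 with hz | hz
        · have : c * (lam h1 - μ h1) = 0 := by linear_combination hz
          rcases mul_eq_zero.mp this with hc0 | hc0
          · rw [hc0, zero_smul]; exact Submodule.zero_mem ⊥
          · exact absurd (by linear_combination hc0) hne
        · exact absurd hz hv
      rw [if_neg hμ]
      unfold sdimWt
      rw [hwtB, bot_inf_eq, bot_inf_eq, finrank_bot]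
      norm_num
  · -- case lam H ≠ 0
    intro hlamH
    have hsmulne : lam H • v ≠ 0 := by
      intro h; rcases smul_eq_zero.mp h with h' | h'
      exacts [hlamH h', hv h']
    have hw2ne : w2 ≠ 0 := fun h => hsmulne (by rw [← hX1w2, h, map_zero])
    have hw3ne : w3 ≠ 0 := by
      intro h
      have e := hX0w3
      rw [h, map_zero] at e
      have e2 : lam H • w2 = 0 := neg_eq_zero.mp e.symm
      rcases smul_eq_zero.mp e2 with h' | h'
      exacts [hlamH h', hw2ne h']
    have hdist1 : lam h₀ ≠ lam h₀ - α h₀ := fun h => hh₀ (by linear_combination h)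
    have hdist2 : lam h₀ ≠ lam h₀ - 2 * α h₀ := fun h => hh₀ (by linear_combination h/2)
    have hdist3 : lam h₀ - α h₀ ≠ lam h₀ - 2 * α h₀ := fun h => hh₀ (by linear_combination h)
    have indep4 : ∀ a b c d : ℂ, a • v + b • w1 + c • w2 + d • w3 = 0 →
        a = 0 ∧ b = 0 ∧ c = 0 ∧ d = 0 := by
      intro a b c d habcd
      have hsum : (a • v) + (b • w1 + c • w2) + (d • w3) = 0 := by rw [← habcd]; abel
      obtain ⟨hA, hB, hC⟩ := sep3 (ρ h₀) (a • v) (b • w1 + c • w2) (d • w3)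
        (lam h₀) (lam h₀ - α h₀) (lam h₀ - 2 * α h₀)
        (by rw [map_smul, hwt, smul_comm])
        (by rw [map_add, map_smul, map_smul, hrw1, hrw2]; module)
        (by rw [map_smul, hrw3, smul_comm])
        hsum hdist1 hdist2 hdist3
      have ha : a = 0 := by
        rcases smul_eq_zero.mp hA with h' | h'; exacts [h', absurd h' hv]
      have hd : d = 0 := by
        rcases smul_eq_zero.mp hC with h' | h'; exacts [h', absurd h' hw3ne]
      have hXB := congrArg (Xop 0) hB
      rw [map_add, map_smul, map_smul, hX0w1, hX0w2, smul_zero, add_zero, map_zero] at hXB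
      have hb : b = 0 := by
        rcases smul_eq_zero.mp hXB with h' | h'; exacts [h', absurd h' hsmulne]
      have hc : c = 0 := by
        rw [hb, zero_smul, zero_add] at hB
        rcases smul_eq_zero.mp hB with h' | h'; exacts [h', absurd h' hw2ne]
      exact ⟨ha, hb, hc, hd⟩
    have hli : LinearIndependent ℂ w := by
      rw [Fintype.linearIndependent_iff]
      intro g hg
      rw [Fin.sum_univ_four] at hg
      obtain ⟨h1, h2, h3, h4⟩ := indep4 (g 0) (g 1) (g 2) (g 3) hg
      intro i
      match i with
      | 0 => exact h1
      | 1 => exact h2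
      | 2 => exact h3
      | 3 => exact h4
    have hrk4 : finrank ℂ V = 4 := by
      rw [finrank_eq_card_basis (Basis.mk hli (by rw [← hUdef, hUtop]))]
      simp
    refine ⟨hrk4, ?_⟩
    have happ : ∀ h : hL, (lam - 2 • α) h = lam h - 2 * α h := fun h => by
      rw [LinearMap.sub_apply, two_smul, LinearMap.add_apply]; ring
    have master : ∀ (μ : hL →ₗ[ℂ] ℂ) (u : V), u ∈ wt ρ μ → ∃ c : Fin 4 → ℂ,
        u = c 0 • v + c 1 • w1 + c 2 • w2 + c 3 • w3 ∧
        ∀ h : hL, c 0 * (μ h - lam h) = 0 ∧ c 1 * (μ h - (lam h - α h)) = 0 ∧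
          c 2 * (μ h - (lam h - α h)) = 0 ∧ c 3 * (μ h - (lam h - 2 * α h)) = 0 := by
      intro μ u hu
      obtain ⟨c, hc⟩ := coeffs u
      refine ⟨c, hc, fun h => ?_⟩
      have h1 := mem_wt.mp hu h
      rw [hc] at h1
      rw [map_add, map_add, map_add, map_smul, map_smul, map_smul, map_smul,
        hwt, hrw1, hrw2, hrw3] at h1
      have key : (c 0 * (μ h - lam h)) • v + (c 1 * (μ h - (lam h - α h))) • w1 +
          (c 2 * (μ h - (lam h - α h))) • w2 + (c 3 * (μ h - (lam h - 2 * α h))) • w3 =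
          μ h • (c 0 • v + c 1 • w1 + c 2 • w2 + c 3 • w3) -
          (c 0 • (lam h • v) + c 1 • ((lam h - α h) • w1) + c 2 • ((lam h - α h) • w2) +
            c 3 • ((lam h - 2 * α h) • w3)) := by module
      have e : (c 0 * (μ h - lam h)) • v + (c 1 * (μ h - (lam h - α h))) • w1 +
          (c 2 * (μ h - (lam h - α h))) • w2 + (c 3 * (μ h - (lam h - 2 * α h))) • w3 = 0 := by
        rw [key, ← h1, sub_self]
      exact indep4 _ _ _ _ e
    have inf_odd_of_le_even : ∀ S : Submodule ℂ V, S ≤ evenPart gr → S ⊓ oddPart gr = ⊥ := by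
      intro S hS
      rw [eq_bot_iff]
      intro u hu
      rw [Submodule.mem_inf] at hu
      obtain ⟨hu1, hu2⟩ := hu
      have he := mem_even.mp (hS hu1)
      have ho := mem_odd.mp hu2
      rw [Submodule.mem_bot]
      exact two_cancel u (by nth_rewrite 1 [← he]; rw [ho]; abel)
    have inf_even_of_le_odd : ∀ S : Submodule ℂ V, S ≤ oddPart gr → S ⊓ evenPart gr = ⊥ := by
      intro S hS
      rw [eq_bot_iff]
      intro u hu
      rw [Submodule.mem_inf] at hu
      obtain ⟨hu1, hu2⟩ := hu
      have ho := mem_odd.mp (hS hu1)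
      have he := mem_even.mp hu2
      rw [Submodule.mem_bot]
      exact two_cancel u (by nth_rewrite 1 [← he]; rw [ho]; abel)
    have hvle : Submodule.span ℂ {v} ≤ evenPart gr :=
      (Submodule.span_singleton_le_iff_mem v _).mpr (mem_even.mpr hvev)
    have hw3le : Submodule.span ℂ {w3} ≤ evenPart gr :=
      (Submodule.span_singleton_le_iff_mem w3 _).mpr (mem_even.mpr hgrw3)
    have h12le : Submodule.span ℂ (Set.range ![w1, w2]) ≤ oddPart gr := by
      apply Submodule.span_le.mpr
      rintro x ⟨i, rfl⟩
      match i with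
      | 0 => exact mem_odd.mpr hgrw1
      | 1 => exact mem_odd.mpr hgrw2
    have hli2 : LinearIndependent ℂ ![w1, w2] := by
      rw [Fintype.linearIndependent_iff]
      intro g hg
      rw [Fin.sum_univ_two] at hg
      obtain ⟨-, h1, h2, -⟩ := indep4 0 (g 0) (g 1) 0
        (by rw [zero_smul, zero_smul, zero_add, add_zero]; exact hg)
      intro i
      match i with
      | 0 => exact h1
      | 1 => exact h2
    have wt_lam : wt ρ lam = Submodule.span ℂ {v} := by
      apply le_antisymm
      · intro u hu
        obtain ⟨c, hc, hcond⟩ := master lam u hu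
        obtain ⟨-, e1, e2, e3⟩ := hcond h₀
        have hc1 : c 1 = 0 := by
          rcases mul_eq_zero.mp e1 with h' | h'
          exacts [h', absurd (by linear_combination h') hh₀]
        have hc2 : c 2 = 0 := by
          rcases mul_eq_zero.mp e2 with h' | h'
          exacts [h', absurd (by linear_combination h') hh₀]
        have hc3 : c 3 = 0 := by
          rcases mul_eq_zero.mp e3 with h' | h'
          exacts [h', absurd (by linear_combination h'/2) hh₀]
        rw [hc, hc1, hc2, hc3, zero_smul, zero_smul, zero_smul, add_zero, add_zero, add_zero]
        exact Submodule.mem_span_singleton.mpr ⟨c 0, rfl⟩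
      · exact (Submodule.span_singleton_le_iff_mem v _).mpr (mem_wt.mpr fun h => hwt h)
    have wt_lam1 : wt ρ (lam - α) = Submodule.span ℂ (Set.range ![w1, w2]) := by
      apply le_antisymm
      · intro u hu
        obtain ⟨c, hc, hcond⟩ := master (lam - α) u hu
        obtain ⟨e0, -, -, e3⟩ := hcond h₀
        rw [LinearMap.sub_apply] at e0 e3
        have hc0 : c 0 = 0 := by
          rcases mul_eq_zero.mp e0 with h' | h'
          exacts [h', absurd (by linear_combination -h') hh₀]
        have hc3 : c 3 = 0 := by
          rcases mul_eq_zero.mp e3 with h' | h'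
          exacts [h', absurd (by linear_combination h') hh₀]
        rw [Submodule.mem_span_range_iff_exists_fun]
        refine ⟨![c 1, c 2], ?_⟩
        rw [Fin.sum_univ_two]
        show c 1 • w1 + c 2 • w2 = u
        rw [hc, hc0, hc3, zero_smul, zero_smul, zero_add, add_zero]
      · apply Submodule.span_le.mpr
        rintro x ⟨i, rfl⟩
        match i with
        | 0 =>
          refine mem_wt.mpr fun h => ?_
          show ρ h w1 = (lam - α) h • w1
          rw [hrw1 h, LinearMap.sub_apply]
        | 1 =>
          refine mem_wt.mpr fun h => ?_
          show ρ h w2 = (lam - α) h • w2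
          rw [hrw2 h, LinearMap.sub_apply]
    have wt_lam2 : wt ρ (lam - 2 • α) = Submodule.span ℂ {w3} := by
      apply le_antisymm
      · intro u hu
        obtain ⟨c, hc, hcond⟩ := master (lam - 2 • α) u hu
        obtain ⟨e0, e1, e2, -⟩ := hcond h₀
        rw [happ] at e0 e1 e2
        have hc0 : c 0 = 0 := by
          rcases mul_eq_zero.mp e0 with h' | h'
          exacts [h', absurd (by linear_combination -h'/2) hh₀]
        have hc1 : c 1 = 0 := by
          rcases mul_eq_zero.mp e1 with h' | h'
          exacts [h', absurd (by linear_combination -h') hh₀]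
        have hc2 : c 2 = 0 := by
          rcases mul_eq_zero.mp e2 with h' | h'
          exacts [h', absurd (by linear_combination -h') hh₀]
        rw [hc, hc0, hc1, hc2, zero_smul, zero_smul, zero_smul, zero_add, zero_add, zero_add]
        exact Submodule.mem_span_singleton.mpr ⟨c 3, rfl⟩
      · refine (Submodule.span_singleton_le_iff_mem w3 _).mpr (mem_wt.mpr fun h => ?_)
        rw [hrw3 h, happ]
    intro μ
    by_cases hm1 : μ = lam
    · rw [if_pos hm1, hm1]
      unfold sdimWt
      rw [wt_lam, inf_eq_left.mpr hvle, inf_odd_of_le_even _ hvle,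
        finrank_span_singleton hv, finrank_bot]
      norm_num
    · by_cases hm2 : μ = lam - α
      · rw [if_neg hm1, if_pos hm2, hm2]
        unfold sdimWt
        rw [wt_lam1, inf_even_of_le_odd _ h12le, inf_eq_left.mpr h12le,
          finrank_bot, finrank_span_eq_card hli2]
        norm_num
      · by_cases hm3 : μ = lam - 2 • α
        · rw [if_neg hm1, if_neg hm2, if_pos hm3, hm3]
          unfold sdimWt
          rw [wt_lam2, inf_eq_left.mpr hw3le, inf_odd_of_le_even _ hw3le,
            finrank_span_singleton hw3ne, finrank_bot]
          norm_num
        · have hwtB : wt ρ μ = ⊥ := by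
            rw [eq_bot_iff]
            intro u hu
            obtain ⟨c, hc, hcond⟩ := master μ u hu
            obtain ⟨k0, hk0⟩ := ne_exists μ lam hm1
            obtain ⟨k1, hk1⟩ := ne_exists μ (lam - α) hm2
            obtain ⟨k3, hk3⟩ := ne_exists μ (lam - 2 • α) hm3
            rw [LinearMap.sub_apply] at hk1
            rw [happ] at hk3
            have hc0 : c 0 = 0 := by
              rcases mul_eq_zero.mp (hcond k0).1 with h' | h'
              exacts [h', absurd (sub_eq_zero.mp h') hk0]
            have hc1 : c 1 = 0 := by
              rcases mul_eq_zero.mp (hcond k1).2.1 with h' | h'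
              exacts [h', absurd (sub_eq_zero.mp h') hk1]
            have hc2 : c 2 = 0 := by
              rcases mul_eq_zero.mp (hcond k1).2.2.1 with h' | h'
              exacts [h', absurd (sub_eq_zero.mp h') hk1]
            have hc3 : c 3 = 0 := by
              rcases mul_eq_zero.mp (hcond k3).2.2.2 with h' | h'
              exacts [h', absurd (sub_eq_zero.mp h') hk3]
            rw [Submodule.mem_bot, hc, hc0, hc1, hc2, hc3]
            simp
          rw [if_neg hm1, if_neg hm2, if_neg hm3]
          unfold sdimWt
          rw [hwtB, bot_inf_eq, bot_inf_eq, finrank_bot]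
          norm_num




end Stmt16
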